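/- Let 0 ≤ s ≤ t ≤ 1 and 0 ≤ x ≤ 1. Then ∫₀ˢ ∫_ℝ (P_{t−s+r} 1_{[0,x]}(z) − P_r 1_{[0,x]}(z))² dz dr ≤ (t−s) x / 2. In particular the left-hand side is at most t − s. -/

import Mathlib

open MeasureTheory Real Filter

noncomputable def heatKernel (t x : ℝ) : ℝ :=
  (1 / Real.sqrt (2 * Real.pi * t)) * Real.exp (-x ^ 2 / (2 * t))

noncomputable def heatP (t : ℝ) (f : ℝ → ℝ) (x : ℝ) : ℝ :=
  if t = 0 then f x else ∫ y : ℝ, heatKernel t (x - y) * f y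


noncomputable def scaled (N : ℝ) (f : ℝ → ℝ) (x : ℝ) : ℝ :=
  (1 / Real.sqrt N) * f (x / N)

noncomputable def ft (f : ℝ → ℝ) (z : ℝ) : ℂ :=
  ∫ y : ℝ, (f y : ℂ) * Complex.exp (Complex.I * z * y)

section basics

lemma heatKernel_eq (t : ℝ) :
    heatKernel t = fun z => (1 / Real.sqrt (2 * Real.pi * t)) * Real.exp (-(1/(2*t)) * z ^ 2) := by
  funext z
  unfold heatKernel
  ring_nf

lemma heatKernel_nonneg (t z : ℝ) : 0 ≤ heatKernel t z := by
  unfold heatKernel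
  positivity

lemma heatKernel_integrable {t : ℝ} (ht : 0 < t) : Integrable (heatKernel t) := by
  rw [heatKernel_eq]
  exact (integrable_exp_neg_mul_sq (by positivity)).const_mul _

lemma heatKernel_integral {t : ℝ} (ht : 0 < t) : ∫ z, heatKernel t z = 1 := by
  rw [heatKernel_eq]
  rw [integral_const_mul, integral_gaussian]
  have h1 : Real.pi / (1/(2*t)) = 2 * Real.pi * t := by field_simp
  rw [h1]
  have : Real.sqrt (2 * Real.pi * t) ≠ 0 := by positivity
  field_simp

lemma heatKernel_le {t : ℝ} (ht : 0 < t) (z : ℝ) :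
    heatKernel t z ≤ 1 / Real.sqrt (2 * Real.pi * t) := by
  unfold heatKernel
  have h1 : Real.exp (-z ^ 2 / (2 * t)) ≤ 1 := by
    rw [Real.exp_le_one_iff]
    have h : 0 ≤ z^2 / (2*t) := by positivity
    have : -z ^ 2 / (2 * t) = -(z^2/(2*t)) := by ring
    linarith [this]
  have h2 : 0 ≤ 1 / Real.sqrt (2 * Real.pi * t) := by positivity
  nlinarith

lemma heatKernel_even (t z : ℝ) : heatKernel t (-z) = heatKernel t z := by
  unfold heatKernel
  norm_num [neg_pow]

lemma heatKernel_continuous (t : ℝ) : Continuous (heatKernel t) := by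
  unfold heatKernel
  fun_prop

end basics

noncomputable def fIn (x : ℝ) : ℝ → ℝ := Set.indicator (Set.Icc 0 x) 1

section fbasics

variable {x : ℝ}

lemma fIn_meas : Measurable (fIn x) :=
  (measurable_const.indicator measurableSet_Icc)

lemma fIn_sm : StronglyMeasurable (fIn x) := fIn_meas.stronglyMeasurable

lemma fIn_nonneg (y : ℝ) : 0 ≤ fIn x y :=
  Set.indicator_nonneg (fun _ _ => zero_le_one) y

lemma fIn_le_one (y : ℝ) : fIn x y ≤ 1 := by
  unfold fIn
  rw [Set.indicator_apply]
  split_ifs <;> norm_num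

lemma fIn_abs_le (y : ℝ) : ‖fIn x y‖ ≤ 1 := by
  rw [Real.norm_eq_abs, abs_of_nonneg (fIn_nonneg y)]
  exact fIn_le_one y

lemma fIn_integrable : Integrable (fIn x) := by
  unfold fIn
  rw [integrable_indicator_iff measurableSet_Icc]
  exact integrableOn_const measure_Icc_lt_top.ne

lemma toReal_ofReal_eq_max (y : ℝ) : (ENNReal.ofReal y).toReal = max y 0 := by
  rcases le_total 0 y with h | h
  · rw [ENNReal.toReal_ofReal h, max_eq_left h]
  · rw [ENNReal.ofReal_of_nonpos h, max_eq_right h]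
    simp

lemma overlap (hx : 0 ≤ x) (d : ℝ) :
    ∫ u, fIn x u * fIn x (u - d) = max (x - |d|) 0 := by
  have key : ∀ u : ℝ, ((0 ≤ u ∧ u ≤ x) ∧ (0 ≤ u - d ∧ u - d ≤ x)) ↔
      (max 0 d ≤ u ∧ u ≤ min x (x + d)) := by
    intro u
    simp only [max_le_iff, le_min_iff]
    constructor <;> intro h <;> obtain ⟨⟨h1, h2⟩, h3, h4⟩ := h <;>
      exact ⟨⟨by linarith, by linarith⟩, by linarith, by linarith⟩
  have h1 : (fun u => fIn x u * fIn x (u - d))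
      = Set.indicator (Set.Icc (max 0 d) (min x (x + d))) 1 := by
    funext u
    unfold fIn
    by_cases h : (0 ≤ u ∧ u ≤ x) ∧ (0 ≤ u - d ∧ u - d ≤ x)
    · rw [Set.indicator_of_mem (Set.mem_Icc.mpr h.1),
        Set.indicator_of_mem (Set.mem_Icc.mpr h.2),
        Set.indicator_of_mem (Set.mem_Icc.mpr ((key u).mp h))]
      norm_num
    · rw [Set.indicator_of_notMem
        (fun hm => h ((key u).mpr (Set.mem_Icc.mp hm)))]
      by_cases hA : (0 ≤ u ∧ u ≤ x)
      · have hB : ¬(0 ≤ u - d ∧ u - d ≤ x) := fun hB => h ⟨hA, hB⟩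
        rw [Set.indicator_of_notMem (fun hm => hB (Set.mem_Icc.mp hm)), mul_zero]
      · rw [Set.indicator_of_notMem (fun hm => hA (Set.mem_Icc.mp hm)), zero_mul]
  rw [h1, integral_indicator measurableSet_Icc]
  simp only [Pi.one_apply]
  rw [setIntegral_const, Real.volume_real_Icc,
    smul_eq_mul, mul_one]
  rcases le_total 0 d with hd | hd
  · rw [abs_of_nonneg hd, max_eq_right hd, min_eq_left (by linarith)]
  · rw [abs_of_nonpos hd, max_eq_left hd, min_eq_right (by linarith)]
    ring_nf

end fbasics

section prepr

variable {x : ℝ}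

lemma heatKernel_scale {t : ℝ} (ht : 0 < t) (w : ℝ) :
    heatKernel t (Real.sqrt t * w) = (Real.sqrt t)⁻¹ * heatKernel 1 w := by
  have hst : 0 < Real.sqrt t := Real.sqrt_pos.mpr ht
  unfold heatKernel
  rw [mul_pow, Real.sq_sqrt ht.le]
  have hexp : -(t * w^2)/(2*t) = -w^2/(2*1) := by field_simp
  rw [hexp]
  rw [show (2:ℝ) * Real.pi * t = (2*Real.pi) * t by ring,
    Real.sqrt_mul (by positivity) t, mul_one]
  have h2 : Real.sqrt (2*Real.pi) ≠ 0 := by positivity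
  field_simp

lemma P_repr {t : ℝ} (ht : 0 < t) (z : ℝ) :
    heatP t (fIn x) z = ∫ w, heatKernel 1 w * fIn x (z - Real.sqrt t * w) := by
  have hst : 0 < Real.sqrt t := Real.sqrt_pos.mpr ht
  rw [heatP, if_neg ht.ne']
  have e1 : (∫ y, heatKernel t (z - y) * fIn x y)
      = ∫ y, heatKernel t y * fIn x (z - y) := by
    have h := integral_sub_left_eq_self
      (fun u => heatKernel t u * fIn x (z - u)) volume z
    simp only [sub_sub_cancel] at h
    exact h
  have e2 := MeasureTheory.Measure.integral_comp_mul_left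
    (fun u => heatKernel t u * fIn x (z - u)) (Real.sqrt t)
  rw [abs_of_pos (by positivity)] at e2
  rw [e1, ← one_smul ℝ (∫ y, heatKernel t y * fIn x (z - y)),
    ← mul_inv_cancel₀ hst.ne', mul_smul, ← e2]
  simp only [heatKernel_scale ht]
  rw [show (∫ w, (Real.sqrt t)⁻¹ * heatKernel 1 w * fIn x (z - Real.sqrt t * w))
      = ∫ w, (Real.sqrt t)⁻¹ * (heatKernel 1 w * fIn x (z - Real.sqrt t * w)) by
        congr 1; funext w; ring,
    integral_const_mul, smul_eq_mul]
  rw [← mul_assoc, mul_inv_cancel₀ hst.ne', one_mul]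

end prepr

section kconv

lemma K_factor {a b : ℝ} (ha : 0 < a) (hb : 0 < b) (w z : ℝ) :
    heatKernel a z * heatKernel b (w - z)
      = heatKernel (a+b) w * heatKernel (a*b/(a+b)) (z - a*w/(a+b)) := by
  have hab : 0 < a + b := by linarith
  unfold heatKernel
  rw [mul_mul_mul_comm, ← Real.exp_add, mul_mul_mul_comm, ← Real.exp_add]
  congr 1
  · rw [div_mul_div_comm, div_mul_div_comm, ← Real.sqrt_mul (by positivity),
      ← Real.sqrt_mul (by positivity), mul_one]
    have harg : (2*Real.pi*a)*(2*Real.pi*b)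
        = (2*Real.pi*(a+b))*(2*Real.pi*(a*b/(a+b))) := by
      field_simp
    rw [harg]
  · congr 1
    field_simp
    ring

lemma K_conv {a b : ℝ} (ha : 0 < a) (hb : 0 < b) (w : ℝ) :
    ∫ z, heatKernel a z * heatKernel b (w - z) = heatKernel (a+b) w := by
  have hc : 0 < a*b/(a+b) := by positivity
  simp only [K_factor ha hb w]
  rw [integral_const_mul, integral_sub_right_eq_self (heatKernel (a*b/(a+b))) (a*w/(a+b)),
    heatKernel_integral hc, mul_one]

end kconv

section pbasics

variable {x : ℝ}

lemma P_def {t : ℝ} (ht : 0 < t) (z : ℝ) :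
    heatP t (fIn x) z = ∫ y, heatKernel t (z - y) * fIn x y := by
  rw [heatP, if_neg ht.ne']

lemma K_comp_integrable {t : ℝ} (ht : 0 < t) (z : ℝ) :
    Integrable (fun y => heatKernel t (z - y)) := by
  have h := (heatKernel_integrable ht).comp_sub_left z
  exact h

lemma P_integrand_integrable {t : ℝ} (ht : 0 < t) (z : ℝ) :
    Integrable (fun y => heatKernel t (z - y) * fIn x y) :=
  Integrable.bdd_mul fIn_integrable
    ((heatKernel_continuous t).comp (continuous_const.sub continuous_id)).aestronglyMeasurable
    (c := 1 / Real.sqrt (2 * Real.pi * t)) (Eventually.of_forall fun y => by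
      rw [Real.norm_eq_abs, abs_of_nonneg (heatKernel_nonneg _ _)]
      exact heatKernel_le ht _)

lemma P_nonneg {t : ℝ} (ht : 0 < t) (z : ℝ) : 0 ≤ heatP t (fIn x) z := by
  rw [P_def ht]
  exact integral_nonneg fun y => mul_nonneg (heatKernel_nonneg _ _) (fIn_nonneg _)

lemma K_int_one {t : ℝ} (ht : 0 < t) (z : ℝ) : (∫ y, heatKernel t (z - y)) = 1 := by
  rw [integral_sub_left_eq_self (heatKernel t) volume z]
  exact heatKernel_integral ht

lemma P_le_one {t : ℝ} (ht : 0 < t) (z : ℝ) : heatP t (fIn x) z ≤ 1 := by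
  rw [P_def ht, ← K_int_one ht z]
  exact integral_mono (P_integrand_integrable ht z) (K_comp_integrable ht z)
    fun y => mul_le_of_le_one_right (heatKernel_nonneg _ _) (fIn_le_one y)

lemma P_sm {t : ℝ} (ht : 0 < t) : StronglyMeasurable (heatP t (fIn x)) := by
  have h : heatP t (fIn x) = fun z => ∫ y, heatKernel t (z - y) * fIn x y :=
    funext fun z => P_def ht z
  rw [h]
  apply MeasureTheory.StronglyMeasurable.integral_prod_right'
    (f := fun p : ℝ × ℝ => heatKernel t (p.1 - p.2) * fIn x p.2)
  exact (((heatKernel_continuous t).comp (continuous_fst.sub continuous_snd)).measurable.mul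
    (fIn_meas.comp measurable_snd)).stronglyMeasurable

lemma P_integrable {t : ℝ} (ht : 0 < t) : Integrable (heatP t (fIn x)) := by
  have h := MeasureTheory.Integrable.convolution_integrand
    (ContinuousLinearMap.mul ℝ ℝ) (fIn_integrable (x := x)) (heatKernel_integrable ht)
  simp only [ContinuousLinearMap.mul_apply'] at h
  have h2 := h.integral_prod_left
  have h3 : heatP t (fIn x) = fun z => ∫ y, fIn x y * heatKernel t (z - y) := by
    funext z
    rw [P_def ht]
    congr 1
    funext y
    ring
  rw [h3]
  exact h2

end pbasics

noncomputable def Gx (x τ : ℝ) : ℝ := ∫ w, heatKernel 1 w * max (x - Real.sqrt τ * |w|) 0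

section gbasics

variable {x : ℝ}

lemma Gx_integrand_integrable (τ : ℝ) (hx : 0 ≤ x) :
    Integrable (fun w => heatKernel 1 w * max (x - Real.sqrt τ * |w|) 0) := by
  apply Integrable.mono' ((heatKernel_integrable one_pos).const_mul x)
  · exact ((heatKernel_continuous 1).measurable.mul
      ((continuous_const.sub (continuous_const.mul continuous_abs)).max
        continuous_const).measurable).aestronglyMeasurable
  · refine Eventually.of_forall fun w => ?_
    have h1 : 0 ≤ heatKernel 1 w := heatKernel_nonneg _ _
    have h2 : max (x - Real.sqrt τ * |w|) 0 ≤ x :=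
      max_le (by nlinarith [Real.sqrt_nonneg τ, abs_nonneg w]) hx
    have h3 : 0 ≤ max (x - Real.sqrt τ * |w|) 0 := le_max_right _ _
    rw [Real.norm_eq_abs, abs_of_nonneg (mul_nonneg h1 h3)]
    calc heatKernel 1 w * max (x - Real.sqrt τ * |w|) 0 ≤ heatKernel 1 w * x := by
          nlinarith
      _ = x * heatKernel 1 w := by ring

lemma Gx_nonneg (hx : 0 ≤ x) (τ : ℝ) : 0 ≤ Gx x τ :=
  integral_nonneg fun w => mul_nonneg (heatKernel_nonneg _ _) (le_max_right _ _)

lemma Gx_le (hx : 0 ≤ x) (τ : ℝ) : Gx x τ ≤ x := by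
  unfold Gx
  have : x = ∫ w, x * heatKernel 1 w := by
    rw [integral_const_mul, heatKernel_integral one_pos, mul_one]
  conv_rhs => rw [this]
  apply integral_mono (Gx_integrand_integrable τ hx)
    ((heatKernel_integrable one_pos).const_mul x)
  intro w
  have h1 : 0 ≤ heatKernel 1 w := heatKernel_nonneg _ _
  have h2 : max (x - Real.sqrt τ * |w|) 0 ≤ x :=
    max_le (by nlinarith [Real.sqrt_nonneg τ, abs_nonneg w]) hx
  dsimp only
  calc heatKernel 1 w * max (x - Real.sqrt τ * |w|) 0 ≤ heatKernel 1 w * x :=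
        mul_le_mul_of_nonneg_left h2 h1
    _ = x * heatKernel 1 w := by ring

lemma Gx_anti (hx : 0 ≤ x) : Antitone (Gx x) := by
  intro τ₁ τ₂ h
  apply integral_mono (Gx_integrand_integrable τ₂ hx) (Gx_integrand_integrable τ₁ hx)
  intro w
  have h1 : 0 ≤ heatKernel 1 w := heatKernel_nonneg _ _
  have h2 : Real.sqrt τ₁ * |w| ≤ Real.sqrt τ₂ * |w| :=
    mul_le_mul_of_nonneg_right (Real.sqrt_le_sqrt h) (abs_nonneg w)
  have h3 : max (x - Real.sqrt τ₂ * |w|) 0 ≤ max (x - Real.sqrt τ₁ * |w|) 0 :=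
    max_le_max (by linarith) le_rfl
  dsimp only
  exact mul_le_mul_of_nonneg_left h3 h1

end gbasics

section fubini

variable {x : ℝ}

lemma fP_eq_G {c : ℝ} (hx : 0 ≤ x) (hc : 0 < c) :
    ∫ v, fIn x v * heatP c (fIn x) v = Gx x c := by
  have hsw : Integrable (Function.uncurry
      (fun v w => fIn x v * (heatKernel 1 w * fIn x (v - Real.sqrt c * w))))
      (volume.prod volume) := by
    apply Integrable.mono'
      (Integrable.mul_prod (fIn_integrable (x := x)) (heatKernel_integrable one_pos))
    · exact ((fIn_meas.comp measurable_fst).mul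
        (((heatKernel_continuous 1).measurable.comp measurable_snd).mul
          (fIn_meas.comp (measurable_fst.sub
            (measurable_const.mul measurable_snd))))).aestronglyMeasurable
    · refine Eventually.of_forall fun p => ?_
      obtain ⟨v, w⟩ := p
      simp only [Function.uncurry_apply_pair]
      have h1 := fIn_nonneg (x := x) v
      have h2 := heatKernel_nonneg 1 w
      have h3 := fIn_nonneg (x := x) (v - Real.sqrt c * w)
      have h4 := fIn_le_one (x := x) (v - Real.sqrt c * w)
      have h5 := fIn_le_one (x := x) v
      rw [Real.norm_eq_abs, abs_of_nonneg (mul_nonneg h1 (mul_nonneg h2 h3))]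
      calc fIn x v * (heatKernel 1 w * fIn x (v - Real.sqrt c * w))
          ≤ fIn x v * (heatKernel 1 w * 1) :=
            mul_le_mul_of_nonneg_left (mul_le_mul_of_nonneg_left h4 h2) h1
        _ = fIn x v * heatKernel 1 w := by ring
  calc ∫ v, fIn x v * heatP c (fIn x) v
      = ∫ v, ∫ w, fIn x v * (heatKernel 1 w * fIn x (v - Real.sqrt c * w)) := by
        congr 1; funext v; rw [P_repr hc, ← integral_const_mul]
    _ = ∫ w, ∫ v, fIn x v * (heatKernel 1 w * fIn x (v - Real.sqrt c * w)) :=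
        integral_integral_swap hsw
    _ = ∫ w, heatKernel 1 w * max (x - Real.sqrt c * |w|) 0 := by
        congr 1; funext w
        rw [show (fun v => fIn x v * (heatKernel 1 w * fIn x (v - Real.sqrt c * w)))
            = fun v => heatKernel 1 w * (fIn x v * fIn x (v - Real.sqrt c * w)) from
            funext fun v => by ring]
        rw [integral_const_mul, overlap hx, abs_mul, abs_of_nonneg (Real.sqrt_nonneg c)]
    _ = Gx x c := rfl

lemma P_semigroup {a b : ℝ} (ha : 0 < a) (hb : 0 < b) (v : ℝ) :
    (∫ z, heatKernel b (v - z) * heatP a (fIn x) z) = heatP (a+b) (fIn x) v := by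
  have hab : 0 < a + b := by linarith
  have hsw : Integrable (Function.uncurry
      (fun z y => heatKernel b (v - z) * (heatKernel a (z - y) * fIn x y)))
      (volume.prod volume) := by
    apply Integrable.mono'
      (Integrable.mul_prod ((heatKernel_integrable hb).comp_sub_left v)
        ((fIn_integrable (x := x)).const_mul (1 / Real.sqrt (2 * Real.pi * a))))
    · exact (((heatKernel_continuous b).comp
        (continuous_const.sub continuous_fst)).measurable.mul
        ((((heatKernel_continuous a).comp
          (continuous_fst.sub continuous_snd)).measurable).mul
            (fIn_meas.comp measurable_snd))).aestronglyMeasurable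
    · refine Eventually.of_forall fun p => ?_
      obtain ⟨z, y⟩ := p
      simp only [Function.uncurry_apply_pair]
      have h1 := heatKernel_nonneg b (v - z)
      have h2 := heatKernel_nonneg a (z - y)
      have h3 := fIn_nonneg (x := x) y
      have h4 := heatKernel_le ha (z - y)
      rw [Real.norm_eq_abs, abs_of_nonneg (mul_nonneg h1 (mul_nonneg h2 h3))]
      exact mul_le_mul_of_nonneg_left (mul_le_mul_of_nonneg_right h4 h3) h1
  calc ∫ z, heatKernel b (v - z) * heatP a (fIn x) z
      = ∫ z, ∫ y, heatKernel b (v - z) * (heatKernel a (z - y) * fIn x y) := by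
        congr 1; funext z; rw [P_def ha, ← integral_const_mul]
    _ = ∫ y, ∫ z, heatKernel b (v - z) * (heatKernel a (z - y) * fIn x y) :=
        integral_integral_swap hsw
    _ = ∫ y, heatKernel (a+b) (v - y) * fIn x y := by
        congr 1; funext y
        rw [show (fun z => heatKernel b (v - z) * (heatKernel a (z - y) * fIn x y))
            = fun z => (heatKernel a (z - y) * heatKernel b (v - z)) * fIn x y from
            funext fun z => by ring]
        rw [integral_mul_const]
        have h := integral_sub_right_eq_self
          (fun ζ => heatKernel a ζ * heatKernel b ((v - y) - ζ)) (μ := volume) y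
        simp only [sub_sub_sub_cancel_right] at h
        rw [h, K_conv ha hb (v - y)]
    _ = heatP (a+b) (fIn x) v := (P_def hab v).symm

lemma PP_eq {a b : ℝ} (hx : 0 ≤ x) (ha : 0 < a) (hb : 0 < b) :
    ∫ z, heatP a (fIn x) z * heatP b (fIn x) z = Gx x (a+b) := by
  have hab : 0 < a + b := by linarith
  have hsw : Integrable (Function.uncurry
      (fun z v => heatP a (fIn x) z * (heatKernel b (z - v) * fIn x v)))
      (volume.prod volume) := by
    apply Integrable.mono'
      (Integrable.mul_prod (P_integrable (x := x) ha)
        ((fIn_integrable (x := x)).const_mul (1 / Real.sqrt (2 * Real.pi * b))))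
    · exact (((P_sm ha).measurable.comp measurable_fst).mul
        ((((heatKernel_continuous b).comp
          (continuous_fst.sub continuous_snd)).measurable).mul
            (fIn_meas.comp measurable_snd))).aestronglyMeasurable
    · refine Eventually.of_forall fun p => ?_
      obtain ⟨z, v⟩ := p
      simp only [Function.uncurry_apply_pair]
      have h1 := P_nonneg (x := x) ha z
      have h2 := heatKernel_nonneg b (z - v)
      have h3 := fIn_nonneg (x := x) v
      have h4 := heatKernel_le hb (z - v)
      rw [Real.norm_eq_abs, abs_of_nonneg (mul_nonneg h1 (mul_nonneg h2 h3))]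
      exact mul_le_mul_of_nonneg_left (mul_le_mul_of_nonneg_right h4 h3) h1
  calc ∫ z, heatP a (fIn x) z * heatP b (fIn x) z
      = ∫ z, ∫ v, heatP a (fIn x) z * (heatKernel b (z - v) * fIn x v) := by
        congr 1; funext z; rw [P_def hb, ← integral_const_mul]
    _ = ∫ v, ∫ z, heatP a (fIn x) z * (heatKernel b (z - v) * fIn x v) :=
        integral_integral_swap hsw
    _ = ∫ v, fIn x v * heatP (a+b) (fIn x) v := by
        congr 1; funext v
        rw [show (fun z => heatP a (fIn x) z * (heatKernel b (z - v) * fIn x v)) =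
            fun z => (heatKernel b (v - z) * heatP a (fIn x) z) * fIn x v from
            funext fun z => by
              rw [show z - v = -(v - z) by ring, heatKernel_even]; ring]
        rw [integral_mul_const, P_semigroup ha hb v]
        ring
    _ = Gx x (a+b) := fP_eq_G hx hab

lemma I_eq {h r : ℝ} (hx : 0 ≤ x) (hh : 0 ≤ h) (hr : 0 < r) :
    (∫ z, (heatP (h + r) (fIn x) z - heatP r (fIn x) z) ^ 2)
      = Gx x ((h+r)+(h+r)) - 2 * Gx x ((h+r)+r) + Gx x (r+r) := by
  have ha : 0 < h + r := by linarith
  have bdd : ∀ {t : ℝ}, 0 < t → ∃ C, ∀ z, ‖heatP t (fIn x) z‖ ≤ C := by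
    intro t htp
    exact ⟨1, fun z => by
      rw [Real.norm_eq_abs, abs_of_nonneg (P_nonneg htp z)]; exact P_le_one htp z⟩
  have huu : Integrable (fun z => heatP (h+r) (fIn x) z * heatP (h+r) (fIn x) z) :=
    Integrable.bdd_mul (P_integrable ha) (P_sm ha).aestronglyMeasurable (Eventually.of_forall (bdd ha).choose_spec)
  have huw : Integrable (fun z => heatP (h+r) (fIn x) z * heatP r (fIn x) z) :=
    Integrable.bdd_mul (P_integrable hr) (P_sm ha).aestronglyMeasurable (Eventually.of_forall (bdd ha).choose_spec)
  have hww : Integrable (fun z => heatP r (fIn x) z * heatP r (fIn x) z) :=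
    Integrable.bdd_mul (P_integrable hr) (P_sm hr).aestronglyMeasurable (Eventually.of_forall (bdd hr).choose_spec)
  have e : (fun z => (heatP (h + r) (fIn x) z - heatP r (fIn x) z) ^ 2)
      = fun z => (heatP (h+r) (fIn x) z * heatP (h+r) (fIn x) z
          - 2 * (heatP (h+r) (fIn x) z * heatP r (fIn x) z))
          + heatP r (fIn x) z * heatP r (fIn x) z :=
    funext fun z => by ring
  have h2I : Integrable (fun z => 2 * (heatP (h+r) (fIn x) z * heatP r (fIn x) z)) :=
    huw.const_mul 2
  have hsub : Integrable (fun z => heatP (h+r) (fIn x) z * heatP (h+r) (fIn x) z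
      - 2 * (heatP (h+r) (fIn x) z * heatP r (fIn x) z)) := huu.sub h2I
  rw [e, integral_add hsub hww, integral_sub huu h2I, integral_const_mul,
    PP_eq hx ha ha, PP_eq hx ha hr, PP_eq hx hr hr]

end fubini

theorem stmt7 (s t x : ℝ) (hs : 0 ≤ s) (hst : s ≤ t) (ht : t ≤ 1)
    (hx0 : 0 ≤ x) (hx1 : x ≤ 1) :
    (∫ r in (0:ℝ)..s, ∫ z : ℝ,
        (heatP (t - s + r) (Set.indicator (Set.Icc 0 x) 1) z
          - heatP r (Set.indicator (Set.Icc 0 x) 1) z) ^ 2)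
      ≤ (t - s) * x / 2
    ∧ (∫ r in (0:ℝ)..s, ∫ z : ℝ,
        (heatP (t - s + r) (Set.indicator (Set.Icc 0 x) 1) z
          - heatP r (Set.indicator (Set.Icc 0 x) 1) z) ^ 2)
      ≤ t - s := by
  have hts : 0 ≤ t - s := by linarith
  have hGint : ∀ a b : ℝ, IntervalIntegrable (Gx x) volume a b :=
    fun a b => (Gx_anti hx0).intervalIntegrable
  have main : (∫ r in (0:ℝ)..s, ∫ z : ℝ,
      (heatP (t - s + r) (Set.indicator (Set.Icc 0 x) 1) z
        - heatP r (Set.indicator (Set.Icc 0 x) 1) z) ^ 2) ≤ (t - s) * x / 2 := by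
    have hstep1 : (∫ r in (0:ℝ)..s, ∫ z : ℝ,
        (heatP (t - s + r) (Set.indicator (Set.Icc 0 x) 1) z
          - heatP r (Set.indicator (Set.Icc 0 x) 1) z) ^ 2)
        = ∫ r in (0:ℝ)..s,
            (Gx x (2*r + 2*(t-s)) - 2 * Gx x (2*r + (t-s)) + Gx x (2*r + 0)) := by
      rw [intervalIntegral.integral_of_le hs, intervalIntegral.integral_of_le hs]
      apply setIntegral_congr_fun measurableSet_Ioc
      intro r hr
      have hI := I_eq (x := x) (h := t - s) (r := r) hx0 hts hr.1
      show (∫ z : ℝ, (heatP (t - s + r) (fIn x) z - heatP r (fIn x) z) ^ 2) = _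
      rw [hI, show (t-s+r)+(t-s+r) = 2*r + 2*(t-s) by ring,
        show (t-s+r)+r = 2*r + (t-s) by ring, show r + r = 2*r + 0 by ring]
    rw [hstep1]
    have hanti : ∀ d : ℝ, Antitone (fun r : ℝ => Gx x (2*r + d)) :=
      fun d u v huv => Gx_anti hx0 (show 2*u+d ≤ 2*v+d by linarith)
    have hint : ∀ d : ℝ, IntervalIntegrable (fun r : ℝ => Gx x (2*r + d)) volume 0 s :=
      fun d => (hanti d).intervalIntegrable
    have h2int : IntervalIntegrable (fun r : ℝ => 2 * Gx x (2*r + (t-s))) volume 0 s :=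
      (hint (t-s)).const_mul 2
    have hsubint : IntervalIntegrable
        (fun r : ℝ => Gx x (2*r + 2*(t-s)) - 2 * Gx x (2*r + (t-s))) volume 0 s :=
      (hint (2*(t-s))).sub h2int
    have hsplit : (∫ r in (0:ℝ)..s,
          (Gx x (2*r + 2*(t-s)) - 2 * Gx x (2*r + (t-s)) + Gx x (2*r + 0)))
        = (∫ r in (0:ℝ)..s, Gx x (2*r + 2*(t-s)))
          - 2 * (∫ r in (0:ℝ)..s, Gx x (2*r + (t-s)))
          + ∫ r in (0:ℝ)..s, Gx x (2*r + 0) := by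
      rw [intervalIntegral.integral_add hsubint (hint 0),
        intervalIntegral.integral_sub (hint (2*(t-s))) h2int,
        intervalIntegral.integral_const_mul]
    rw [hsplit]
    have hcma : ∀ d : ℝ, (∫ r in (0:ℝ)..s, Gx x (2*r + d))
        = 2⁻¹ * ((∫ σ in (0:ℝ)..(2*s+d), Gx x σ) - (∫ σ in (0:ℝ)..d, Gx x σ)) := by
      intro d
      have h1 := intervalIntegral.integral_comp_mul_add (a := 0) (b := s)
        (fun σ => Gx x σ) (two_ne_zero) d
      rw [h1, show (2:ℝ)*0+d = d by ring, smul_eq_mul]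
      congr 1
      exact (intervalIntegral.integral_interval_sub_left
        (hGint 0 (2*s+d)) (hGint 0 d)).symm
    rw [hcma, hcma, hcma, show (2*s+(0:ℝ)) = 2*s by ring]
    rw [show (∫ σ in (0:ℝ)..(0:ℝ), Gx x σ) = 0 from intervalIntegral.integral_same]
    have hm : (∫ σ in (0:ℝ)..(2*s+2*(t-s)), Gx x σ)
          - (∫ σ in (0:ℝ)..(2*s+(t-s)), Gx x σ)
        ≤ (∫ σ in (0:ℝ)..(2*s+(t-s)), Gx x σ) - (∫ σ in (0:ℝ)..(2*s), Gx x σ) := by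
      have e1 := intervalIntegral.integral_interval_sub_left
        (hGint 0 (2*s+2*(t-s))) (hGint 0 (2*s+(t-s)))
      have e2 := intervalIntegral.integral_interval_sub_left
        (hGint 0 (2*s+(t-s))) (hGint 0 (2*s))
      rw [e1, e2]
      have e3 := intervalIntegral.integral_comp_add_right (a := 2*s) (b := 2*s+(t-s))
        (fun σ => Gx x σ) (t-s)
      rw [show 2*s+(t-s)+(t-s) = 2*s+2*(t-s) by ring] at e3
      rw [← e3]
      have hanti2 : Antitone (fun σ : ℝ => Gx x (σ + (t-s))) :=
        fun u v huv => Gx_anti hx0 (show u+(t-s) ≤ v+(t-s) by linarith)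
      exact intervalIntegral.integral_mono_on (by linarith)
        hanti2.intervalIntegrable (hGint _ _)
        (fun σ _ => Gx_anti hx0 (by linarith))
    have hb1 : (∫ σ in (0:ℝ)..(t-s), Gx x σ) ≤ (t-s) * x := by
      calc (∫ σ in (0:ℝ)..(t-s), Gx x σ) ≤ ∫ _ in (0:ℝ)..(t-s), x :=
            intervalIntegral.integral_mono_on hts (hGint _ _) intervalIntegrable_const
              (fun σ _ => Gx_le hx0 σ)
        _ = (t-s) * x := by
            rw [intervalIntegral.integral_const, smul_eq_mul, sub_zero]
    have hb2 : (∫ σ in (0:ℝ)..(t-s), Gx x σ) ≤ ∫ σ in (0:ℝ)..(2*(t-s)), Gx x σ := by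
      have e := intervalIntegral.integral_interval_sub_left
        (hGint 0 (2*(t-s))) (hGint 0 (t-s))
      have hnn : 0 ≤ ∫ σ in (t-s)..(2*(t-s)), Gx x σ :=
        intervalIntegral.integral_nonneg (by linarith) (fun σ _ => Gx_nonneg hx0 σ)
      linarith
    linarith
  exact ⟨main, le_trans main (by nlinarith)⟩
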